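/- Strong duality for maximum entropy ICE: let σ be a probability distribution on a finite nonempty set 𝒜, let Φ be a finite nonempty deviation set with regret features r : Φ → 𝒜 → ℝ^d, and let P = {σ̂ : σ̂ a probability distribution on 𝒜 such that for every f ∈ Φ, r(f,σ̂) lies in the convex hull of {r(g,σ) : g ∈ Φ}} (the standard ICE polytope, which contains σ and hence is nonempty). Then max_{σ̂∈P} H(σ̂) = inf_{θ : Φ → ℝ^d} [ Σ_{f∈Φ} max_{g∈Φ} ⟨r(g,σ), θ_f⟩ + log ( Σ_{a∈𝒜} exp( −Σ_{f∈Φ} ⟨r(f,a), θ_f⟩ ) ) ]. -/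

import Mathlib

open scoped BigOperators

/-- Dot product on `ℝ^d`. -/
def dot {d : ℕ} (x w : Fin d → ℝ) : ℝ := ∑ k, x k * w k

/-- `σ` is a probability distribution on the finite set `A`. -/
def IsProb {A : Type} [Fintype A] (σ : A → ℝ) : Prop :=
  (∀ a, 0 ≤ σ a) ∧ ∑ a, σ a = 1

/-- Expected regret features of deviation `f` under distribution `σ`. -/
def expFeat {d : ℕ} {A Φ : Type} [Fintype A] (r : Φ → A → Fin d → ℝ)
    (σ : A → ℝ) (f : Φ) : Fin d → ℝ := ∑ a, σ a • r f a

/-- Membership in the standard ICE polytope relative to `σ`. -/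
def InICE {d : ℕ} {A Φ : Type} [Fintype A] (r : Φ → A → Fin d → ℝ)
    (σ σhat : A → ℝ) : Prop :=
  IsProb σhat ∧ ∀ f : Φ, expFeat r σhat f ∈ convexHull ℝ (Set.range (expFeat r σ))

/-- Shannon entropy `H(σ) = -∑ σ(a) log σ(a)` (with `0 log 0 = 0`). -/
noncomputable def shannonEntropy {A : Type} [Fintype A] (σ : A → ℝ) : ℝ :=
  -∑ a, σ a * Real.log (σ a)

/-- The dual MaxEnt ICE objective. -/
noncomputable def dualObj {d : ℕ} {A Φ : Type} [Fintype A] [Fintype Φ]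
    (r : Φ → A → Fin d → ℝ) (σ : A → ℝ) (θ : Φ → Fin d → ℝ) : ℝ :=
  (∑ f : Φ, ⨆ g : Φ, dot (expFeat r σ g) (θ f)) +
    Real.log (∑ a, Real.exp (-∑ f : Φ, dot (r f a) (θ f)))


set_option linter.unusedSectionVars false
set_option linter.unusedVariables false

section lemmas

variable {d : ℕ} {A Φ : Type} [Fintype A] [Fintype Φ]

lemma dot_sum {ι : Type*} (s : Finset ι) (x : ι → Fin d → ℝ) (w : Fin d → ℝ) :
    dot (∑ i ∈ s, x i) w = ∑ i ∈ s, dot (x i) w := by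
  simp only [dot, Finset.sum_apply, Finset.sum_mul]
  exact Finset.sum_comm

lemma dot_smul (c : ℝ) (x w : Fin d → ℝ) : dot (c • x) w = c * dot x w := by
  simp [dot, Finset.mul_sum, mul_assoc]

lemma dot_add (x y w : Fin d → ℝ) : dot (x + y) w = dot x w + dot y w := by
  simp [dot, add_mul, Finset.sum_add_distrib]

lemma dot_sub (x y w : Fin d → ℝ) : dot (x - y) w = dot x w - dot y w := by
  simp [dot, sub_mul, Finset.sum_sub_distrib]

lemma isLinearMap_dot (w : Fin d → ℝ) : IsLinearMap ℝ (fun x => dot x w) :=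
  ⟨fun x y => dot_add x y w, fun c x => by simpa [smul_eq_mul] using dot_smul c x w⟩

lemma dot_expFeat (r : Φ → A → Fin d → ℝ) (τ : A → ℝ) (f : Φ) (w : Fin d → ℝ) :
    dot (expFeat r τ f) w = ∑ a, τ a * dot (r f a) w := by
  simp [expFeat, dot_sum, dot_smul]

lemma sup_attained [Nonempty Φ] (h : Φ → ℝ) :
    ∃ g₀, (⨆ g, h g) = h g₀ ∧ ∀ g, h g ≤ h g₀ := by
  obtain ⟨g₀, hg₀⟩ := Finite.exists_max h
  exact ⟨g₀, le_antisymm (ciSup_le hg₀)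
    (le_ciSup (Set.Finite.bddAbove (Set.finite_range h)) g₀), hg₀⟩

lemma dot_le_of_mem_hull [Nonempty Φ] {c : Φ → Fin d → ℝ} {m : Fin d → ℝ} (w : Fin d → ℝ)
    (hm : m ∈ convexHull ℝ (Set.range c)) : dot m w ≤ ⨆ g, dot (c g) w := by
  have hconv : Convex ℝ {x : Fin d → ℝ | dot x w ≤ ⨆ g, dot (c g) w} :=
    convex_halfSpace_le (isLinearMap_dot w) _
  have hsub : Set.range c ⊆ {x : Fin d → ℝ | dot x w ≤ ⨆ g, dot (c g) w} := by
    rintro _ ⟨g, rfl⟩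
    exact le_ciSup (f := fun g => dot (c g) w)
      (Set.Finite.bddAbove (Set.finite_range _)) g
  exact convexHull_min hsub hconv hm

end lemmas

section gibbs

variable {d : ℕ} {A Φ : Type} [Fintype A] [Fintype Φ]

lemma sum_exp_pos [Nonempty A] (x : A → ℝ) : 0 < ∑ a, Real.exp (x a) :=
  Finset.sum_pos (fun a _ => Real.exp_pos _) Finset.univ_nonempty

/-- Gibbs inequality / variational bound. -/
lemma entropy_add_le_logZ [Nonempty A] (τ : A → ℝ) (hτ : IsProb τ) (x : A → ℝ) :
    shannonEntropy τ + ∑ a, τ a * x a ≤ Real.log (∑ a, Real.exp (x a)) := by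
  set Z := ∑ a, Real.exp (x a) with hZdef
  have hZ : 0 < Z := sum_exp_pos x
  have key : ∀ a, τ a * x a - τ a * Real.log (τ a) - τ a * Real.log Z
      ≤ Real.exp (x a) / Z - τ a := by
    intro a
    rcases eq_or_lt_of_le (hτ.1 a) with h0 | hpos
    · rw [← h0]
      simp
      positivity
    · have h1 : Real.log (Real.exp (x a) / (τ a * Z))
          ≤ Real.exp (x a) / (τ a * Z) - 1 :=
        Real.log_le_sub_one_of_pos (by positivity)
      have h2 : Real.log (Real.exp (x a) / (τ a * Z))
          = x a - Real.log (τ a) - Real.log Z := by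
        rw [Real.log_div (by positivity) (by positivity), Real.log_exp,
          Real.log_mul (ne_of_gt hpos) (ne_of_gt hZ)]
        ring
      rw [h2] at h1
      have h3 := mul_le_mul_of_nonneg_left h1 hpos.le
      have h4 : τ a * (Real.exp (x a) / (τ a * Z) - 1)
          = Real.exp (x a) / Z - τ a := by
        field_simp
      rw [h4] at h3
      nlinarith [h3]
  have hsum := Finset.sum_le_sum (fun a (_ : a ∈ Finset.univ) => key a)
  have hL : ∑ a, (τ a * x a - τ a * Real.log (τ a) - τ a * Real.log Z)
      = (∑ a, τ a * x a) + shannonEntropy τ - Real.log Z := by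
    rw [shannonEntropy]
    rw [Finset.sum_sub_distrib, Finset.sum_sub_distrib, ← Finset.sum_mul, hτ.2]
    ring
  have hR : ∑ a, (Real.exp (x a) / Z - τ a) = 0 := by
    rw [Finset.sum_sub_distrib, ← Finset.sum_div, hτ.2, ← hZdef, div_self (ne_of_gt hZ)]
    ring
  rw [hL, hR] at hsum
  linarith

/-- The Gibbs distribution: probability + variational equality. -/
lemma gibbs_eq [Nonempty A] (x : A → ℝ) :
    IsProb (fun a => Real.exp (x a) / ∑ b, Real.exp (x b)) ∧
    shannonEntropy (fun a => Real.exp (x a) / ∑ b, Real.exp (x b)) +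
      ∑ a, (Real.exp (x a) / ∑ b, Real.exp (x b)) * x a
      = Real.log (∑ a, Real.exp (x a)) := by
  set Z := ∑ b, Real.exp (x b) with hZdef
  have hZ : 0 < Z := sum_exp_pos x
  have hprob : IsProb (fun a => Real.exp (x a) / Z) := by
    refine ⟨fun a => by positivity, ?_⟩
    rw [← Finset.sum_div, ← hZdef, div_self (ne_of_gt hZ)]
  refine ⟨hprob, ?_⟩
  have hlog : ∀ a, Real.log (Real.exp (x a) / Z) = x a - Real.log Z := by
    intro a
    rw [Real.log_div (by positivity) (ne_of_gt hZ), Real.log_exp]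
  rw [shannonEntropy]
  have : ∑ a, (Real.exp (x a) / Z) * Real.log (Real.exp (x a) / Z)
      = ∑ a, (Real.exp (x a) / Z) * x a - Real.log Z := by
    calc ∑ a, (Real.exp (x a) / Z) * Real.log (Real.exp (x a) / Z)
        = ∑ a, ((Real.exp (x a) / Z) * x a - (Real.exp (x a) / Z) * Real.log Z) := by
          refine Finset.sum_congr rfl fun a _ => ?_
          rw [hlog a]; ring
      _ = ∑ a, (Real.exp (x a) / Z) * x a - (∑ a, (Real.exp (x a) / Z)) * Real.log Z := by
          rw [Finset.sum_sub_distrib, Finset.sum_mul]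
      _ = ∑ a, (Real.exp (x a) / Z) * x a - Real.log Z := by
          rw [hprob.2, one_mul]
  rw [this]
  ring

end gibbs

section part3

variable {d : ℕ} {A Φ : Type} [Fintype A] [Fintype Φ]

lemma sum_weighted_dot (r : Φ → A → Fin d → ℝ) (τ : A → ℝ) (θ : Φ → Fin d → ℝ) :
    ∑ a, τ a * (-∑ f, dot (r f a) (θ f)) = -∑ f, dot (expFeat r τ f) (θ f) := by
  have key : ∑ a, τ a * (∑ f, dot (r f a) (θ f)) = ∑ f, dot (expFeat r τ f) (θ f) := by
    simp_rw [dot_expFeat, Finset.mul_sum]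
    exact Finset.sum_comm
  simp only [mul_neg]
  rw [Finset.sum_neg_distrib, key]

lemma weak_duality [Nonempty A] [Nonempty Φ] (r : Φ → A → Fin d → ℝ) (σ τ : A → ℝ)
    (hτ : InICE r σ τ) (θ : Φ → Fin d → ℝ) : shannonEntropy τ ≤ dualObj r σ θ := by
  have h1 := entropy_add_le_logZ τ hτ.1 (fun a => -∑ f, dot (r f a) (θ f))
  rw [sum_weighted_dot] at h1
  have h2 : ∑ f, dot (expFeat r τ f) (θ f) ≤ ∑ f : Φ, ⨆ g : Φ, dot (expFeat r σ g) (θ f) :=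
    Finset.sum_le_sum fun f _ => dot_le_of_mem_hull (θ f) (hτ.2 f)
  rw [dualObj]
  linarith

lemma expFeat_comb (r : Φ → A → Fin d → ℝ) (τ₁ τ₂ : A → ℝ) (p q : ℝ) (f : Φ) :
    expFeat r (p • τ₁ + q • τ₂) f = p • expFeat r τ₁ f + q • expFeat r τ₂ f := by
  simp only [expFeat, Finset.smul_sum, ← Finset.sum_add_distrib]
  refine Finset.sum_congr rfl fun a _ => ?_
  simp [add_smul, smul_smul]

lemma shannonEntropy_eq_sum (τ : A → ℝ) :
    shannonEntropy τ = ∑ a, Real.negMulLog (τ a) := by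
  rw [shannonEntropy, ← Finset.sum_neg_distrib]
  exact Finset.sum_congr rfl fun a _ => by rw [Real.negMulLog]; ring

lemma entropy_concave (τ₁ τ₂ : A → ℝ) (h1 : ∀ a, 0 ≤ τ₁ a) (h2 : ∀ a, 0 ≤ τ₂ a)
    {p q : ℝ} (hp : 0 ≤ p) (hq : 0 ≤ q) (hpq : p + q = 1) :
    p * shannonEntropy τ₁ + q * shannonEntropy τ₂ ≤ shannonEntropy (p • τ₁ + q • τ₂) := by
  simp_rw [shannonEntropy_eq_sum, Finset.mul_sum, ← Finset.sum_add_distrib]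
  refine Finset.sum_le_sum fun a _ => ?_
  have := Real.concaveOn_negMulLog.2 (Set.mem_Ici.2 (h1 a)) (Set.mem_Ici.2 (h2 a)) hp hq hpq
  simpa using this

lemma continuous_expFeat (r : Φ → A → Fin d → ℝ) (f : Φ) :
    Continuous fun τ : A → ℝ => expFeat r τ f := by
  unfold expFeat
  exact continuous_finset_sum _ fun a _ => (continuous_apply a).smul continuous_const

lemma continuous_entropy : Continuous (shannonEntropy (A := A)) := by
  unfold shannonEntropy
  exact (continuous_finset_sum _ fun a _ =>
    Real.continuous_mul_log.comp (continuous_apply a)).neg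

lemma isClosed_isProb : IsClosed {τ : A → ℝ | IsProb τ} := by
  have : {τ : A → ℝ | IsProb τ}
      = (⋂ a, {τ : A → ℝ | 0 ≤ τ a}) ∩ {τ : A → ℝ | ∑ a, τ a = 1} := by
    ext τ; simp [IsProb, Set.mem_iInter]
  rw [this]
  exact (isClosed_iInter fun a => isClosed_le continuous_const (continuous_apply a)).inter
    (isClosed_eq (continuous_finset_sum _ fun a _ => continuous_apply a) continuous_const)

lemma isCompact_isProb : IsCompact {τ : A → ℝ | IsProb τ} := by
  refine (isCompact_closedBall (0 : A → ℝ) 1).of_isClosed_subset isClosed_isProb ?_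
  intro τ hτ
  rw [Metric.mem_closedBall, dist_zero_right]
  refine (pi_norm_le_iff_of_nonneg zero_le_one).2 fun a => ?_
  rw [Real.norm_eq_abs, abs_of_nonneg (hτ.1 a)]
  calc τ a ≤ ∑ b, τ b := Finset.single_le_sum (fun b _ => hτ.1 b) (Finset.mem_univ a)
    _ = 1 := hτ.2

lemma isClosed_ICE (r : Φ → A → Fin d → ℝ) (σ : A → ℝ) :
    IsClosed {τ : A → ℝ | InICE r σ τ} := by
  have : {τ : A → ℝ | InICE r σ τ} = {τ : A → ℝ | IsProb τ} ∩
      ⋂ f, (fun τ => expFeat r τ f) ⁻¹' (convexHull ℝ (Set.range (expFeat r σ))) := by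
    ext τ; simp [InICE, Set.mem_iInter]
  rw [this]
  exact isClosed_isProb.inter (isClosed_iInter fun f =>
    ((Set.finite_range (expFeat r σ)).isClosed_convexHull (𝕜 := ℝ)).preimage (continuous_expFeat r f))

lemma isCompact_ICE (r : Φ → A → Fin d → ℝ) (σ : A → ℝ) :
    IsCompact {τ : A → ℝ | InICE r σ τ} :=
  isCompact_isProb.of_isClosed_subset (isClosed_ICE r σ) fun _ hτ => hτ.1

end part3

section part4

open Filter Topology

variable {d : ℕ} {A Φ : Type} [Fintype A] [Nonempty A] [Fintype Φ] [Nonempty Φ]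
  [DecidableEq Φ]

lemma pi_decomp (u : Φ → Fin d → ℝ) :
    ∑ g : Φ, ∑ k : Fin d, u g k • (Pi.single g (Pi.single k (1:ℝ)) : Φ → Fin d → ℝ) = u := by
  funext g' k'
  simp [Finset.sum_apply, Pi.single_apply, ite_apply, Pi.zero_apply, Finset.sum_ite_eq,
    Finset.sum_ite_eq', mul_ite, mul_one, mul_zero]

lemma clm_decomp (F : ((Φ → Fin d → ℝ) × ℝ) →L[ℝ] ℝ) (u : Φ → Fin d → ℝ) (t : ℝ) :
    F (u, t) = (∑ g : Φ, ∑ k : Fin d, u g k * F ((Pi.single g (Pi.single k 1) : Φ → Fin d → ℝ), 0))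
      + t * F (0, 1) := by
  have hrep : ((u, t) : (Φ → Fin d → ℝ) × ℝ)
      = (∑ g : Φ, ∑ k : Fin d,
          u g k • (((Pi.single g (Pi.single k (1:ℝ)) : Φ → Fin d → ℝ), (0:ℝ)) : (Φ → Fin d → ℝ) × ℝ))
        + t • (((0 : Φ → Fin d → ℝ), (1:ℝ)) : (Φ → Fin d → ℝ) × ℝ) := by
    refine Prod.ext ?_ ?_
    · simp only [Prod.fst_add, Prod.fst_sum, Prod.smul_fst, Prod.smul_snd, smul_zero,
        add_zero, Prod.smul_mk]
      exact (pi_decomp u).symm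
    · simp [Prod.snd_sum]
  rw [hrep, map_add, map_sum, map_smul]
  simp only [map_sum, map_smul, smul_eq_mul]

end part4

section part5

open Filter Topology

variable {d : ℕ} {A Φ : Type} [Fintype A] [Nonempty A] [Fintype Φ] [Nonempty Φ]

lemma dual_le_max_add (r : Φ → A → Fin d → ℝ) (σ : A → ℝ)
    (τstar : A → ℝ) (hτstar : InICE r σ τstar)
    (hmax : ∀ τ, InICE r σ τ → shannonEntropy τ ≤ shannonEntropy τstar)
    {ε : ℝ} (hε : 0 < ε) :
    ∃ θ : Φ → Fin d → ℝ, dualObj r σ θ ≤ shannonEntropy τstar + ε := by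
  classical
  set pstar := shannonEntropy τstar with hpstar
  set hull := convexHull ℝ (Set.range (expFeat r σ)) with hhull
  set hyp : Set ((Φ → Fin d → ℝ) × ℝ) :=
    {p | ∃ τ, IsProb τ ∧ p.2 ≤ shannonEntropy τ ∧ ∀ f, expFeat r τ f - p.1 f ∈ hull}
    with hhyp
  -- hyp is convex
  have hconv : Convex ℝ hyp := by
    rintro p ⟨τ₁, h₁, ht₁, hc₁⟩ q ⟨τ₂, h₂, ht₂, hc₂⟩ a b ha hb hab
    refine ⟨a • τ₁ + b • τ₂, ⟨?_, ?_⟩, ?_, ?_⟩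
    · intro c
      have := h₁.1 c; have := h₂.1 c
      simp only [Pi.add_apply, Pi.smul_apply, smul_eq_mul]
      positivity
    · simp only [Pi.add_apply, Pi.smul_apply, smul_eq_mul]
      rw [Finset.sum_add_distrib, ← Finset.mul_sum, ← Finset.mul_sum, h₁.2, h₂.2]
      simpa using hab
    · have hsnd : (a • p + b • q).2 = a * p.2 + b * q.2 := rfl
      rw [hsnd]
      calc a * p.2 + b * q.2 ≤ a * shannonEntropy τ₁ + b * shannonEntropy τ₂ :=
            add_le_add (mul_le_mul_of_nonneg_left ht₁ ha) (mul_le_mul_of_nonneg_left ht₂ hb)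
        _ ≤ shannonEntropy (a • τ₁ + b • τ₂) := entropy_concave τ₁ τ₂ h₁.1 h₂.1 ha hb hab
    · intro f
      have hfst : (a • p + b • q).1 f = a • p.1 f + b • q.1 f := rfl
      rw [hfst, expFeat_comb]
      have : a • expFeat r τ₁ f + b • expFeat r τ₂ f - (a • p.1 f + b • q.1 f)
          = a • (expFeat r τ₁ f - p.1 f) + b • (expFeat r τ₂ f - q.1 f) := by
        rw [smul_sub, smul_sub]; abel
      rw [this]
      exact (convex_convexHull ℝ _) (hc₁ f) (hc₂ f) ha hb hab
  -- points below the max entropy are in hyp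
  have hpt : ∀ t ≤ pstar, (((0 : Φ → Fin d → ℝ), t) : (Φ → Fin d → ℝ) × ℝ) ∈ hyp := by
    intro t ht
    exact ⟨τstar, hτstar.1, ht, fun f => by simpa using hτstar.2 f⟩
  -- (0, pstar + ε) is not in the closure of hyp
  have hnot : (((0 : Φ → Fin d → ℝ), pstar + ε) : (Φ → Fin d → ℝ) × ℝ) ∉ closure hyp := by
    intro hmem
    obtain ⟨y, hy, hylim⟩ := mem_closure_iff_seq_limit.1 hmem
    choose τs hτs hts hcs using hy
    obtain ⟨τi, hτi, φ, hφ, hlim⟩ :=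
      isCompact_isProb.tendsto_subseq (x := τs) (fun n => hτs n)
    have hu : Tendsto (fun n => (y n).1) atTop (𝓝 0) := (continuous_fst.tendsto _).comp hylim
    have ht2 : Tendsto (fun n => (y n).2) atTop (𝓝 (pstar + ε)) :=
      (continuous_snd.tendsto _).comp hylim
    have hHlim : Tendsto (fun n => shannonEntropy (τs (φ n))) atTop
        (𝓝 (shannonEntropy τi)) := (continuous_entropy.tendsto _).comp hlim
    have htφ : Tendsto (fun n => (y (φ n)).2) atTop (𝓝 (pstar + ε)) :=
      ht2.comp hφ.tendsto_atTop
    have hle : pstar + ε ≤ shannonEntropy τi :=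
      le_of_tendsto_of_tendsto' htφ hHlim (fun n => hts (φ n))
    have hICE : InICE r σ τi := by
      refine ⟨hτi, fun f => ?_⟩
      have hv : Tendsto (fun n => expFeat r (τs (φ n)) f - (y (φ n)).1 f) atTop
          (𝓝 (expFeat r τi f - (0 : Φ → Fin d → ℝ) f)) :=
        (((continuous_expFeat r f).tendsto _).comp hlim).sub
          (((continuous_apply f).tendsto _).comp (hu.comp hφ.tendsto_atTop))
      rw [Pi.zero_apply, sub_zero] at hv
      exact ((Set.finite_range (expFeat r σ)).isClosed_convexHull (𝕜 := ℝ)).mem_of_tendsto hv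
        (Filter.Eventually.of_forall fun n => hcs (φ n) f)
    have := hmax τi hICE
    linarith
  -- separation
  obtain ⟨F, crit, hFs, hFx⟩ :=
    geometric_hahn_banach_closed_point hconv.closure isClosed_closure hnot
  have hFhyp : ∀ p ∈ hyp, F p < crit := fun p hp => hFs p (subset_closure hp)
  set β := F (0, 1) with hβ
  have hF0t : ∀ t : ℝ, F (((0 : Φ → Fin d → ℝ), t)) = t * β := by
    intro t
    rw [clm_decomp]
    simp
    exact Or.inl hβ.symm
  have hβpos : 0 < β := by
    have h1 : pstar * β < crit := by
      have := hFhyp _ (hpt pstar le_rfl); rwa [hF0t] at this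
    have h2 : crit < (pstar + ε) * β := by
      have := hFx; rwa [hF0t] at this
    nlinarith
  set θ : Φ → Fin d → ℝ :=
    fun g k => -(F ((Pi.single g (Pi.single k 1) : Φ → Fin d → ℝ), 0)) / β with hθ
  refine ⟨θ, ?_⟩
  -- the Gibbs distribution for θ
  obtain ⟨hqprob, hqeq⟩ := gibbs_eq (A := A) (fun a => -∑ f, dot (r f a) (θ f))
  set Z := ∑ b, Real.exp (-∑ f, dot (r f b) (θ f)) with hZ
  set q : A → ℝ := fun a => Real.exp (-∑ f, dot (r f a) (θ f)) / Z with hq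
  -- hqeq : shannonEntropy q + ∑ a, q a * (-∑ f, dot (r f a) (θ f)) = Real.log Z
  have hsum : ∑ a, q a * (-∑ f, dot (r f a) (θ f))
      = -∑ f, dot (expFeat r q f) (θ f) := sum_weighted_dot r q θ
  have hZlog : Real.log Z = shannonEntropy q - ∑ f, dot (expFeat r q f) (θ f) := by
    rw [← hqeq, hsum]; ring
  -- choose per-deviation maximizers
  have hmaxg : ∀ f : Φ, ∃ g₀ : Φ,
      (⨆ g, dot (expFeat r σ g) (θ f)) = dot (expFeat r σ g₀) (θ f) :=
    fun f => (sup_attained _).imp fun g₀ h => h.1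
  choose gf hgf using hmaxg
  set u : Φ → Fin d → ℝ := fun f => expFeat r q f - expFeat r σ (gf f) with hu
  have humem : ((u, shannonEntropy q) : (Φ → Fin d → ℝ) × ℝ) ∈ hyp := by
    refine ⟨q, hqprob, le_rfl, fun f => ?_⟩
    have : expFeat r q f - u f = expFeat r σ (gf f) := by rw [hu]; simp
    rw [this]
    exact subset_convexHull ℝ _ (Set.mem_range_self (gf f))
  have hineq := (hFhyp _ humem).trans hFx
  rw [hF0t] at hineq
  -- expand F (u, shannonEntropy q)
  have hFe : ∀ (g : Φ) (k : Fin d),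
      F ((Pi.single g (Pi.single k 1) : Φ → Fin d → ℝ), 0) = -β * θ g k := by
    intro g k
    rw [hθ]
    field_simp
  have hexp : F (u, shannonEntropy q)
      = -β * (∑ g, dot (u g) (θ g)) + shannonEntropy q * β := by
    rw [clm_decomp]
    congr 1
    simp_rw [hFe, dot, Finset.mul_sum]
    exact Finset.sum_congr rfl fun g _ => Finset.sum_congr rfl fun k _ => by ring
  rw [hexp] at hineq
  -- conclude
  have key : shannonEntropy q - ∑ g, dot (u g) (θ g) < pstar + ε := by
    nlinarith [hineq, hβpos]
  have hdots : ∑ g, dot (u g) (θ g)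
      = ∑ f, dot (expFeat r q f) (θ f) - ∑ f : Φ, ⨆ g, dot (expFeat r σ g) (θ f) := by
    rw [← Finset.sum_sub_distrib]
    refine Finset.sum_congr rfl fun f _ => ?_
    rw [hu]
    rw [dot_sub, hgf f]
  rw [dualObj, ← hZ, hZlog]
  rw [hdots] at key
  linarith

end part5

/-- Strong duality for maximum entropy ICE: the maximal entropy over the standard
ICE polytope equals the infimum of the dual objective. -/
theorem maxent_ICE_strong_duality
    {d : ℕ} {A Φ : Type} [Fintype A] [Nonempty A] [Fintype Φ] [Nonempty Φ]
    (r : Φ → A → Fin d → ℝ) (σ : A → ℝ) (hσ : IsProb σ) :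
    (⨆ τ : {τ : A → ℝ // InICE r σ τ}, shannonEntropy τ.1) =
      ⨅ θ : Φ → Fin d → ℝ, dualObj r σ θ := by
  classical
  have hσP : InICE r σ σ := ⟨hσ, fun f => subset_convexHull ℝ _ (Set.mem_range_self f)⟩
  obtain ⟨τstar, hτstarP, hmax⟩ := (isCompact_ICE r σ).exists_isMaxOn ⟨σ, hσP⟩
    continuous_entropy.continuousOn
  have hmax' : ∀ τ, InICE r σ τ → shannonEntropy τ ≤ shannonEntropy τstar :=
    fun τ hτ => hmax hτ
  haveI : Nonempty {τ : A → ℝ // InICE r σ τ} := ⟨⟨σ, hσP⟩⟩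
  have hsup : (⨆ τ : {τ : A → ℝ // InICE r σ τ}, shannonEntropy τ.1)
      = shannonEntropy τstar := by
    refine le_antisymm (ciSup_le fun τ => hmax' τ.1 τ.2) ?_
    have hbdd : BddAbove (Set.range fun τ : {τ : A → ℝ // InICE r σ τ} =>
        shannonEntropy τ.1) := ⟨shannonEntropy τstar, by rintro _ ⟨τ, rfl⟩; exact hmax' τ.1 τ.2⟩
    exact le_ciSup hbdd ⟨τstar, hτstarP⟩
  have hwd : ∀ θ, shannonEntropy τstar ≤ dualObj r σ θ :=
    fun θ => weak_duality r σ τstar hτstarP θ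
  have hbddB : BddBelow (Set.range (dualObj r σ)) :=
    ⟨shannonEntropy τstar, by rintro _ ⟨θ, rfl⟩; exact hwd θ⟩
  rw [hsup]
  refine le_antisymm (le_ciInf hwd) ?_
  refine le_of_forall_pos_le_add fun ε hε => ?_
  obtain ⟨θ, hθ⟩ := dual_le_max_add r σ τstar hτstarP hmax' hε
  exact (ciInf_le hbddB θ).trans hθ
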